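/- Let θ : [N, N+1] → (0,∞) be C¹ and v : [N, N+1] → (0,∞) measurable, and let β ≥ 0. Then for all x ∈ [N, N+1]: |θ(x)^{(β+1)/2} − (∫_N^{N+1} θ dy)^{(β+1)/2}| ≤ ((β+1)/2) · (∫_N^{N+1} θ^β θ_x² / (θ² v) dy)^{1/2} · (∫_N^{N+1} θ v dy)^{1/2}. -/

import Mathlib

open Real MeasureTheory intervalIntegral

/-- Pointwise control of `θ^{(β+1)/2}` by its mean over `[N, N+1]` plus the
weighted Dirichlet integral, via the mean value theorem and Cauchy–Schwarz. -/
theorem stmt6 (N β : ℝ) (θ v : ℝ → ℝ)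
    (hβ : 0 ≤ β) (hθ : ContDiff ℝ 1 θ)
    (hθpos : ∀ x ∈ Set.Icc N (N + 1), 0 < θ x)
    (hv : Measurable v) (hvpos : ∀ x ∈ Set.Icc N (N + 1), 0 < v x)
    (h1 : IntervalIntegrable
      (fun y => θ y ^ β * (deriv θ y) ^ 2 / (θ y ^ 2 * v y)) volume N (N + 1))
    (h2 : IntervalIntegrable (fun y => θ y * v y) volume N (N + 1)) :
    ∀ x ∈ Set.Icc N (N + 1),
      |θ x ^ ((β + 1) / 2) - (∫ y in N..(N + 1), θ y) ^ ((β + 1) / 2)| ≤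
        ((β + 1) / 2) *
          (∫ y in N..(N + 1), θ y ^ β * (deriv θ y) ^ 2 / (θ y ^ 2 * v y)) ^ ((1 : ℝ) / 2) *
          (∫ y in N..(N + 1), θ y * v y) ^ ((1 : ℝ) / 2) := by
  have hN : N ≤ N + 1 := by linarith
  set I : Set ℝ := Set.Icc N (N + 1) with hI
  set A : ℝ → ℝ := fun y => θ y ^ β * (deriv θ y) ^ 2 / (θ y ^ 2 * v y) with hA
  set B : ℝ → ℝ := fun y => θ y * v y with hB
  set p : ℝ := (β + 1) / 2 with hpdef
  have hp0 : 0 < p := by rw [hpdef]; positivity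
  have hθc : Continuous θ := hθ.continuous
  have hθ' : Continuous (deriv θ) := hθ.continuous_deriv le_rfl
  have hApos : ∀ y ∈ I, 0 ≤ A y := fun y hy => by
    have h1 := hθpos y hy; have h2 := hvpos y hy
    have : (0:ℝ) < θ y ^ 2 * v y := by positivity
    exact div_nonneg (by positivity) this.le
  have hBpos : ∀ y ∈ I, 0 ≤ B y := fun y hy =>
    mul_nonneg (hθpos y hy).le (hvpos y hy).le
  -- mean value point
  obtain ⟨c, hcI, hcval⟩ : ∃ c ∈ I, θ c = ∫ y in N..(N + 1), θ y := by
    have hne : I.Nonempty := Set.nonempty_Icc.2 hN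
    obtain ⟨a, haI, hamin⟩ := isCompact_Icc.exists_isMinOn hne hθc.continuousOn
    obtain ⟨b, hbI, hbmax⟩ := isCompact_Icc.exists_isMaxOn hne hθc.continuousOn
    have hint : IntervalIntegrable θ volume N (N + 1) := hθc.intervalIntegrable _ _
    have hlow : θ a ≤ ∫ y in N..(N + 1), θ y := by
      have := intervalIntegral.integral_mono_on hN (_root_.intervalIntegrable_const (c := θ a))
        hint (fun y hy => hamin hy)
      simpa using this
    have hhigh : (∫ y in N..(N + 1), θ y) ≤ θ b := by
      have := intervalIntegral.integral_mono_on hN hint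
        (_root_.intervalIntegrable_const (c := θ b)) (fun y hy => hbmax hy)
      simpa using this
    have hmem : (∫ y in N..(N + 1), θ y) ∈ Set.uIcc (θ a) (θ b) := by
      rw [Set.uIcc_of_le (hlow.trans hhigh)]
      exact ⟨hlow, hhigh⟩
    have hsub : Set.uIcc a b ⊆ I := by
      rw [hI, ← Set.uIcc_of_le hN]
      exact Set.uIcc_subset_uIcc (by rwa [Set.uIcc_of_le hN]) (by rwa [Set.uIcc_of_le hN])
    obtain ⟨cc, hcc, hccv⟩ := intermediate_value_uIcc (hθc.continuousOn.mono hsub) hmem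
    exact ⟨cc, hsub hcc, hccv⟩
  intro x hx
  rw [← hcval]
  -- key lemma for ordered endpoints
  have key : ∀ a b : ℝ, a ∈ I → b ∈ I → a ≤ b →
      |θ b ^ p - θ a ^ p| ≤
        p * (∫ y in N..(N + 1), A y) ^ ((1:ℝ)/2) * (∫ y in N..(N + 1), B y) ^ ((1:ℝ)/2) := by
    intro a b haI hbI hab
    have hsubI : Set.Icc a b ⊆ I := Set.Icc_subset_Icc haI.1 hbI.2
    have hsubIoc : Set.Ioc a b ⊆ Set.Ioc N (N + 1) := Set.Ioc_subset_Ioc haI.1 hbI.2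
    have hmemI : ∀ y ∈ Set.uIcc a b, y ∈ I := fun y hy =>
      hsubI (by rwa [Set.uIcc_of_le hab] at hy)
    -- FTC
    have hg : ∀ y ∈ Set.uIcc a b, HasDerivAt (fun t => θ t ^ p)
        (deriv θ y * p * θ y ^ (p - 1)) y := by
      intro y hy
      exact ((hθ.differentiable one_ne_zero).differentiableAt.hasDerivAt).rpow_const
        (Or.inl (hθpos y (hmemI y hy)).ne')
    have hgint : IntervalIntegrable (fun y => deriv θ y * p * θ y ^ (p - 1)) volume a b := by
      apply ContinuousOn.intervalIntegrable
      apply ContinuousOn.mul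
      · exact (hθ'.continuousOn.mul continuousOn_const)
      · exact ContinuousOn.rpow_const hθc.continuousOn
          (fun y hy => Or.inl (hθpos y (hmemI y hy)).ne')
    have hftc : θ b ^ p - θ a ^ p = ∫ y in a..b, deriv θ y * p * θ y ^ (p - 1) :=
      (intervalIntegral.integral_eq_sub_of_hasDerivAt hg hgint).symm
    rw [hftc]
    -- Cauchy-Schwarz setup on the restricted measure
    set μ : Measure ℝ := volume.restrict (Set.Ioc a b) with hμ
    have hμAint : Integrable A μ := (h1.1).mono_set hsubIoc
    have hμBint : Integrable B μ := (h2.1).mono_set hsubIoc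
    have hAmem : ∀ y ∈ Set.Ioc a b, y ∈ I := fun y hy =>
      Set.Ioc_subset_Icc_self (hsubIoc hy)
    have hsqA : MemLp (fun y => Real.sqrt (A y)) 2 μ := by
      rw [memLp_two_iff_integrable_sq (Real.continuous_sqrt.comp_aestronglyMeasurable hμAint.aestronglyMeasurable)]
      refine hμAint.congr ?_
      refine ae_restrict_of_forall_mem measurableSet_Ioc fun y hy => ?_
      exact (Real.sq_sqrt (hApos y (hAmem y hy))).symm
    have hsqB : MemLp (fun y => Real.sqrt (B y)) 2 μ := by
      rw [memLp_two_iff_integrable_sq (Real.continuous_sqrt.comp_aestronglyMeasurable hμBint.aestronglyMeasurable)]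
      refine hμBint.congr ?_
      refine ae_restrict_of_forall_mem measurableSet_Ioc fun y hy => ?_
      exact (Real.sq_sqrt (hBpos y (hAmem y hy))).symm
    have hconj : (2:ℝ).HolderConjugate 2 := Real.HolderConjugate.two_two
    have hofReal : ENNReal.ofReal (2:ℝ) = 2 := by
      rw [ENNReal.ofReal_ofNat]
    have hCS := MeasureTheory.integral_mul_le_Lp_mul_Lq_of_nonneg hconj
      (μ := μ) (f := fun y => Real.sqrt (A y)) (g := fun y => Real.sqrt (B y))
      (ae_of_all _ fun y => Real.sqrt_nonneg _)
      (ae_of_all _ fun y => Real.sqrt_nonneg _)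
      (by rwa [hofReal]) (by rwa [hofReal])
    have heqA : ∫ y, Real.sqrt (A y) ^ (2:ℝ) ∂μ = ∫ y, A y ∂μ := by
      refine integral_congr_ae ?_
      refine ae_restrict_of_forall_mem measurableSet_Ioc fun y hy => ?_
      show Real.sqrt (A y) ^ (2:ℝ) = A y
      have h2c := Real.rpow_natCast (Real.sqrt (A y)) 2
      push_cast at h2c
      rw [h2c]
      exact Real.sq_sqrt (hApos y (hAmem y hy))
    have heqB : ∫ y, Real.sqrt (B y) ^ (2:ℝ) ∂μ = ∫ y, B y ∂μ := by
      refine integral_congr_ae ?_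
      refine ae_restrict_of_forall_mem measurableSet_Ioc fun y hy => ?_
      show Real.sqrt (B y) ^ (2:ℝ) = B y
      have h2c := Real.rpow_natCast (Real.sqrt (B y)) 2
      push_cast at h2c
      rw [h2c]
      exact Real.sq_sqrt (hBpos y (hAmem y hy))
    rw [heqA, heqB] at hCS
    -- monotonicity of the set integrals
    have hmonoA : ∫ y, A y ∂μ ≤ ∫ y in N..(N + 1), A y := by
      rw [intervalIntegral.integral_of_le hN]
      refine setIntegral_mono_set h1.1 ?_ (HasSubset.Subset.eventuallyLE hsubIoc)
      exact ae_restrict_of_forall_mem measurableSet_Ioc fun y hy =>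
        hApos y (Set.Ioc_subset_Icc_self hy)
    have hmonoB : ∫ y, B y ∂μ ≤ ∫ y in N..(N + 1), B y := by
      rw [intervalIntegral.integral_of_le hN]
      refine setIntegral_mono_set h2.1 ?_ (HasSubset.Subset.eventuallyLE hsubIoc)
      exact ae_restrict_of_forall_mem measurableSet_Ioc fun y hy =>
        hBpos y (Set.Ioc_subset_Icc_self hy)
    have hμAnn : 0 ≤ ∫ y, A y ∂μ :=
      integral_nonneg_of_ae (ae_restrict_of_forall_mem measurableSet_Ioc
        fun y hy => hApos y (hAmem y hy))
    have hμBnn : 0 ≤ ∫ y, B y ∂μ :=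
      integral_nonneg_of_ae (ae_restrict_of_forall_mem measurableSet_Ioc
        fun y hy => hBpos y (hAmem y hy))
    -- main chain
    calc |∫ y in a..b, deriv θ y * p * θ y ^ (p - 1)|
        ≤ ∫ y in a..b, |deriv θ y * p * θ y ^ (p - 1)| :=
          intervalIntegral.abs_integral_le_integral_abs hab
      _ = ∫ y in a..b, p * (Real.sqrt (A y) * Real.sqrt (B y)) := by
          refine intervalIntegral.integral_congr fun y hy => ?_
          have hyI : y ∈ I := hmemI y hy
          have ht := hθpos y hyI
          have hw := hvpos y hyI
          have hsAB : Real.sqrt (A y) * Real.sqrt (B y) = θ y ^ (p - 1) * |deriv θ y| := by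
            rw [← Real.sqrt_mul (hApos y hyI)]
            have key2 : θ y ^ (β - 1) = θ y ^ β / θ y ^ (2:ℕ) * θ y := by
              have hcast := Real.rpow_natCast (θ y) 2
              push_cast at hcast
              rw [← hcast, ← Real.rpow_sub ht, ← Real.rpow_add_one ht.ne']
              congr 1
              ring
            have hABval : A y * B y = (θ y ^ (p - 1) * |deriv θ y|) ^ 2 := by
              have hexp : (p - 1) * ((2:ℕ):ℝ) = β - 1 := by rw [hpdef]; push_cast; ring
              rw [mul_pow, sq_abs, ← Real.rpow_natCast (θ y ^ (p - 1)) 2,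
                ← Real.rpow_mul ht.le, hexp, key2, hA, hB]
              simp only
              field_simp
            rw [hABval, Real.sqrt_sq (by positivity)]
          rw [hsAB]
          rw [abs_mul, abs_mul, abs_of_nonneg hp0.le,
            abs_of_nonneg (Real.rpow_nonneg ht.le _)]
          ring
      _ = p * ∫ y in a..b, Real.sqrt (A y) * Real.sqrt (B y) :=
          intervalIntegral.integral_const_mul _ _
      _ = p * ∫ y, Real.sqrt (A y) * Real.sqrt (B y) ∂μ := by
          rw [intervalIntegral.integral_of_le hab]
      _ ≤ p * ((∫ y, A y ∂μ) ^ ((1:ℝ)/2) * (∫ y, B y ∂μ) ^ ((1:ℝ)/2)) := by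
          exact mul_le_mul_of_nonneg_left hCS hp0.le
      _ ≤ p * ((∫ y in N..(N + 1), A y) ^ ((1:ℝ)/2) * (∫ y in N..(N + 1), B y) ^ ((1:ℝ)/2)) := by
          refine mul_le_mul_of_nonneg_left ?_ hp0.le
          exact mul_le_mul (Real.rpow_le_rpow hμAnn hmonoA (by norm_num))
            (Real.rpow_le_rpow hμBnn hmonoB (by norm_num))
            (Real.rpow_nonneg hμBnn _) (Real.rpow_nonneg (hμAnn.trans hmonoA) _)
      _ = p * (∫ y in N..(N + 1), A y) ^ ((1:ℝ)/2) * (∫ y in N..(N + 1), B y) ^ ((1:ℝ)/2) := by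
          ring
  rcases le_total c x with h | h
  · exact key c x hcI hx h
  · rw [abs_sub_comm]
    exact key x c hx hcI h
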